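/- Let G be a finite group acting by homeomorphisms on a locally connected space B, let b : B → A be an open continuous surjection such that b(x) = b(y) iff x and y are in the same G-orbit, and let K be the set of points x ∈ B not having a neighborhood V with g·V ∩ V = ∅ for all g ≠ e. If K is negligible in B, then the image I = b(K) is negligible in A, and moreover a subset element of A is negligible if and only if its pullback under b is negligible in B; consequently b is diffuse. -/
import Mathlib


open Set Topology

/-- An open subset `U` is Z-dense if it meets every non-empty open connected set
in a non-empty connected set. -/
def IsZDense {X : Type*} [TopologicalSpace X] (U : Set X) : Prop :=
  IsOpen U ∧ ∀ C : Set X, IsOpen C → IsConnected C → IsConnected (U ∩ C)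

/-- A subset is negligible if its complement is Z-dense. -/
def IsNegligible {X : Type*} [TopologicalSpace X] (I : Set X) : Prop :=
  IsZDense Iᶜ

/-- A negligible subset element `(U, I)`: `U` open, `I ⊆ U`, the subspace `U`
locally connected, and `I` negligible in the subspace `U`. -/
def NegligibleElem {Y : Type*} [TopologicalSpace Y] (U I : Set Y) : Prop :=
  IsOpen U ∧ I ⊆ U ∧ LocallyConnectedSpace ↥U ∧
    IsNegligible ((Subtype.val ⁻¹' I : Set ↥U))

/-- A continuous function is diffuse if it pulls back negligible subset elements
to negligible subset elements. -/
def Diffuse {X Y : Type*} [TopologicalSpace X] [TopologicalSpace Y] (f : X → Y) : Prop :=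
  Continuous f ∧ ∀ U I : Set Y, NegligibleElem U I → NegligibleElem (f ⁻¹' U) (f ⁻¹' I)

open Pointwise

/-- The upper ramification set of a group action: points having no neighborhood
`V` with `g • V ∩ V = ∅` for all non-identity `g`. -/
def upperRamification (G : Type*) {B : Type*} [Group G] [TopologicalSpace B]
    [MulAction G B] : Set B :=
  {x : B | ¬ ∃ V : Set B, IsOpen V ∧ x ∈ V ∧ ∀ g : G, g ≠ 1 → Disjoint (g • V) V}

section Aux

variable {X Y : Type*} [TopologicalSpace X] [TopologicalSpace Y]

lemma isNegligible_iff' {I : Set X} : IsNegligible I ↔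
    (IsOpen Iᶜ ∧ ∀ C : Set X, IsOpen C → IsConnected C → IsConnected (Iᶜ ∩ C)) := Iff.rfl

lemma negligibleElem_iff' {U I : Set Y} : NegligibleElem U I ↔
    (IsOpen U ∧ I ⊆ U ∧ LocallyConnectedSpace ↥U ∧
      IsNegligible ((Subtype.val ⁻¹' I : Set ↥U))) := Iff.rfl

lemma isConnected_of_inducing_image {f : X → Y} (hf : Topology.IsInducing f) {s : Set X}
    (h : IsConnected (f '' s)) : IsConnected s :=
  ⟨Set.image_nonempty.mp h.1, hf.isPreconnected_image.mp h.2⟩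

lemma isConnected_image_val_iff {U : Set X} {s : Set ↥U} :
    IsConnected (Subtype.val '' s) ↔ IsConnected s :=
  ⟨fun h => isConnected_of_inducing_image Topology.IsInducing.subtypeVal h,
   fun h => h.image _ continuous_subtype_val.continuousOn⟩

/-- Transfer of negligibility in an open subspace to an ambient statement. -/
lemma negligible_val_iff {U I : Set X} (hU : IsOpen U) (hIU : I ⊆ U) :
    IsNegligible ((Subtype.val ⁻¹' I : Set ↥U)) ↔
      (IsOpen (U \ I) ∧ ∀ C, C ⊆ U → IsOpen C → IsConnected C → IsConnected (C \ I)) := by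
  have e := hU.isOpenEmbedding_subtypeVal
  rw [isNegligible_iff']
  constructor
  · rintro ⟨ho, hc⟩
    constructor
    · have h1 := e.isOpenMap _ ho
      rwa [← Set.preimage_compl, Subtype.image_preimage_val, ← Set.diff_eq] at h1
    · intro C hCU hCo hCc
      have hC' : IsConnected (Subtype.val ⁻¹' C : Set ↥U) := by
        apply isConnected_image_val_iff.mp
        rwa [Subtype.image_preimage_val, Set.inter_eq_self_of_subset_right hCU]
      have h2 := hc _ (hCo.preimage continuous_subtype_val) hC'
      have himg := isConnected_image_val_iff.mpr h2
      rwa [← Set.preimage_compl, ← Set.preimage_inter, Subtype.image_preimage_val,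
        show U ∩ (Iᶜ ∩ C) = C \ I by
          ext a
          simp only [mem_inter_iff, mem_compl_iff, mem_diff]
          exact ⟨fun h => ⟨h.2.2, h.2.1⟩, fun h => ⟨hCU h.1, h.2, h.1⟩⟩] at himg
  · rintro ⟨ho, hc⟩
    constructor
    · rw [e.isOpen_iff_image_isOpen, ← Set.preimage_compl, Subtype.image_preimage_val,
        ← Set.diff_eq]
      exact ho
    · intro C' hC'o hC'c
      have hCU : Subtype.val '' C' ⊆ U := by rintro a ⟨x, _, rfl⟩; exact x.2
      have hCo : IsOpen (Subtype.val '' C') := e.isOpenMap _ hC'o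
      have hCc : IsConnected (Subtype.val '' C') := isConnected_image_val_iff.mpr hC'c
      have h3 := hc _ hCU hCo hCc
      apply isConnected_of_inducing_image e.toIsInducing
      rwa [← Set.preimage_compl, Set.image_inter Subtype.val_injective,
        Subtype.image_preimage_val,
        show U ∩ Iᶜ ∩ Subtype.val '' C' = Subtype.val '' C' \ I by
          ext a
          simp only [mem_inter_iff, mem_compl_iff, mem_diff]
          exact ⟨fun h => ⟨h.2, h.1.2⟩, fun h => ⟨⟨hCU h.1, h.2⟩, h.1⟩⟩]

/-- Pulling back connectedness of a difference along a map injective on an open set. -/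
lemma isConnected_diff_preimage_of_injOn {b : X → Y} (hb : Continuous b) (hopen : IsOpenMap b)
    {W : Set X} (hWo : IsOpen W) (hinj : Set.InjOn b W) {I : Set Y}
    (h : IsConnected (b '' W \ I)) : IsConnected (W \ b ⁻¹' I) := by
  have hfo : Topology.IsOpenEmbedding (fun x : ↥W => b x.1) :=
    .of_continuous_injective_isOpenMap (hb.comp continuous_subtype_val)
      (fun x y hxy => Subtype.ext (hinj x.2 y.2 hxy))
      (hopen.comp hWo.isOpenMap_subtype_val)
  have himg : (fun x : ↥W => b x.1) '' (Subtype.val ⁻¹' (W \ b ⁻¹' I)) = b '' W \ I := by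
    ext a
    constructor
    · rintro ⟨x, hx, rfl⟩
      exact ⟨⟨x.1, x.2, rfl⟩, hx.2⟩
    · rintro ⟨⟨y, hyW, rfl⟩, haI⟩
      exact ⟨⟨y, hyW⟩, ⟨hyW, haI⟩, rfl⟩
  have hs : IsConnected (Subtype.val ⁻¹' (W \ b ⁻¹' I) : Set ↥W) :=
    isConnected_of_inducing_image hfo.toIsInducing (himg ▸ h)
  have hval : Subtype.val '' (Subtype.val ⁻¹' (W \ b ⁻¹' I) : Set ↥W) = W \ b ⁻¹' I := by
    rw [Subtype.image_preimage_val]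
    exact Set.inter_eq_self_of_subset_right Set.diff_subset
  exact hval ▸ (hs.image _ continuous_subtype_val.continuousOn)

end Aux

/-- For a finite group acting by homeomorphisms on a locally connected space with
negligible upper ramification set, and `b : B → A` the orbit quotient (open,
continuous, surjective), the lower ramification set `b(K)` is negligible, a
subset element of `A` is negligible iff its pullback under `b` is, and `b` is
diffuse. -/
theorem quotient_negligible_ramification
    {G B A : Type*} [Group G] [Finite G] [TopologicalSpace B]
    [LocallyConnectedSpace B] [TopologicalSpace A] [MulAction G B]
    (hcont : ∀ g : G, Continuous fun x : B => g • x)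
    (b : B → A) (hb : Continuous b) (hopen : IsOpenMap b)
    (hsurj : Function.Surjective b)
    (hfib : ∀ x y : B, b x = b y ↔ ∃ g : G, g • x = y)
    (hK : IsNegligible (upperRamification G (B := B))) :
    IsNegligible (b '' upperRamification G (B := B)) ∧
      (∀ U I : Set A, NegligibleElem U I ↔ NegligibleElem (b ⁻¹' U) (b ⁻¹' I)) ∧
      Diffuse b := by
  classical
  haveI : ContinuousConstSMul G B := ⟨hcont⟩
  set K := upperRamification G (B := B) with hKdef
  rw [isNegligible_iff'] at hK
  obtain ⟨hKc_open, hKconn⟩ := hK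
  have hmemK : ∀ x : B, x ∉ K ↔
      ∃ V : Set B, IsOpen V ∧ x ∈ V ∧ ∀ g : G, g ≠ 1 → Disjoint (g • V) V := by
    intro x
    simp only [hKdef, upperRamification, mem_setOf_eq, not_not]
  have hKinv : ∀ (g : G) (x : B), x ∉ K → g • x ∉ K := by
    intro g x hx
    obtain ⟨V, hVo, hxV, hd⟩ := (hmemK x).mp hx
    refine (hmemK (g • x)).mpr ⟨g • V, hVo.smul g, smul_mem_smul_set hxV, ?_⟩
    intro h hne
    have key : h • g • V = g • ((g⁻¹ * h * g) • V) := by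
      rw [smul_smul, smul_smul]
      congr 1
      group
    rw [key, disjoint_smul_set]
    refine hd _ fun e => hne ?_
    have h2 : g * (g⁻¹ * h * g) * g⁻¹ = h := by group
    rw [e] at h2
    simpa using h2.symm
  have hKmem_inv : ∀ (g : G) (x : B), g • x ∈ K ↔ x ∈ K := by
    intro g x
    constructor
    · intro h
      by_contra hx
      exact hKinv g x hx h
    · intro h
      by_contra hgx
      have h2 := hKinv g⁻¹ (g • x) hgx
      rw [inv_smul_smul] at h2
      exact h2 h
  have hsatK : ∀ x : B, b x ∈ b '' K ↔ x ∈ K := by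
    intro x
    constructor
    · rintro ⟨k, hk, he⟩
      obtain ⟨g, hg⟩ := (hfib k x).mp he
      rw [← hg]
      exact (hKmem_inv g k).mpr hk
    · intro h
      exact ⟨x, h, rfl⟩
  have hbsmul : ∀ (g : G) (y : B), b (g • y) = b y :=
    fun g y => ((hfib y (g • y)).mpr ⟨g, rfl⟩).symm
  -- every connected component of the preimage of an open connected set surjects onto it
  have hcomp : ∀ C : Set A, IsOpen C → IsPreconnected C → ∀ x ∈ b ⁻¹' C,
      b '' connectedComponentIn (b ⁻¹' C) x = C := by
    intro C hCo hCc x hx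
    set D := b ⁻¹' C with hD
    set E := connectedComponentIn D x with hE
    have hDo : IsOpen D := hCo.preimage hb
    have hEo : IsOpen E := hDo.connectedComponentIn
    have hED : E ⊆ D := connectedComponentIn_subset _ _
    set S : Set B := ⋃ g : G, g • E with hS
    have hSsat : ∀ (g : G) (y : B), y ∈ S → g • y ∈ S := by
      intro g y hy
      simp only [hS, mem_iUnion] at hy ⊢
      obtain ⟨h, hyh⟩ := hy
      exact ⟨g * h, by rw [mul_smul]; exact smul_mem_smul_set hyh⟩
    have hSD : S ⊆ D := by
      intro y hy
      simp only [hS, mem_iUnion] at hy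
      obtain ⟨g, z, hz, rfl⟩ := hy
      show b (g • z) ∈ C
      rw [hbsmul]
      exact hED hz
    have hSo : IsOpen S := isOpen_iUnion fun g => hEo.smul g
    have hDSo : IsOpen (D \ S) := by
      rw [isOpen_iff_forall_mem_open]
      intro y hy
      refine ⟨connectedComponentIn D y, ?_, hDo.connectedComponentIn,
        mem_connectedComponentIn hy.1⟩
      intro z hz
      refine ⟨connectedComponentIn_subset _ _ hz, fun hzS => hy.2 ?_⟩
      simp only [hS, mem_iUnion] at hzS ⊢
      obtain ⟨g, hzg⟩ := hzS
      refine ⟨g, ?_⟩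
      have hFc : IsPreconnected (connectedComponentIn D y) := isPreconnected_connectedComponentIn
      have hgF : IsPreconnected (g⁻¹ • connectedComponentIn D y) := by
        rw [← Set.image_smul]
        exact hFc.image _ (hcont g⁻¹).continuousOn
      have hgFD : g⁻¹ • connectedComponentIn D y ⊆ D := by
        rintro _ ⟨w, hw, rfl⟩
        show b (g⁻¹ • w) ∈ C
        rw [hbsmul]
        exact connectedComponentIn_subset D y hw
      have hzE : g⁻¹ • z ∈ E := by
        obtain ⟨w, hw, hwz⟩ := hzg
        rw [← hwz, inv_smul_smul]
        exact hw
      have hmem : g⁻¹ • z ∈ g⁻¹ • connectedComponentIn D y := smul_mem_smul_set hz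
      have hsub : g⁻¹ • connectedComponentIn D y ⊆ E := by
        have h1 := hgF.subset_connectedComponentIn hmem hgFD
        have h2 := connectedComponentIn_eq (hE ▸ hzE)
        rw [← h2, ← hE] at h1
        exact h1
      have hy' : g⁻¹ • y ∈ E := hsub (smul_mem_smul_set (mem_connectedComponentIn hy.1))
      exact ⟨g⁻¹ • y, hy', smul_inv_smul g y⟩
    have hxE : x ∈ E := mem_connectedComponentIn hx
    have hxS : x ∈ S := by
      simp only [hS, mem_iUnion]
      exact ⟨1, by rw [one_smul]; exact hxE⟩
    have hCsub : C ⊆ b '' S ∪ b '' (D \ S) := by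
      intro a ha
      obtain ⟨y, rfl⟩ := hsurj a
      by_cases hy : y ∈ S
      · exact Or.inl ⟨y, hy, rfl⟩
      · exact Or.inr ⟨y, ⟨ha, hy⟩, rfl⟩
    have hdisj : Disjoint (b '' S) (b '' (D \ S)) := by
      rw [Set.disjoint_left]
      rintro a ⟨y, hyS, rfl⟩ ⟨z, hzDS, he⟩
      obtain ⟨g, hg⟩ := (hfib y z).mp he.symm
      exact hzDS.2 (hg ▸ hSsat g y hyS)
    have hCS : C ⊆ b '' S := by
      rcases hCc.subset_or_subset (hopen _ hSo) (hopen _ hDSo) hdisj hCsub with h | h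
      · exact h
      · exact absurd (h hx) (Set.disjoint_left.mp hdisj ⟨x, hxS, rfl⟩)
    have hbSE : b '' S = b '' E := by
      apply Set.Subset.antisymm
      · rintro _ ⟨y, hyS, rfl⟩
        simp only [hS, mem_iUnion] at hyS
        obtain ⟨g, z, hz, rfl⟩ := hyS
        exact ⟨z, hz, (hbsmul g z).symm⟩
      · apply Set.image_mono
        intro z hz
        simp only [hS, mem_iUnion]
        exact ⟨1, by rw [one_smul]; exact hz⟩
    apply Set.Subset.antisymm
    · rintro _ ⟨y, hy, rfl⟩
      exact hED hy
    · rw [← hbSE]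
      exact hCS
  -- slices: off K, b is injective on a neighborhood
  have hslice : ∀ x : B, x ∉ K → ∃ V : Set B, IsOpen V ∧ x ∈ V ∧ Set.InjOn b V := by
    intro x hx
    obtain ⟨V, hVo, hxV, hd⟩ := (hmemK x).mp hx
    refine ⟨V, hVo, hxV, fun y hy z hz he => ?_⟩
    obtain ⟨g, hg⟩ := (hfib y z).mp he
    by_cases hg1 : g = 1
    · rw [hg1, one_smul] at hg
      exact hg
    · exact absurd hz (Set.disjoint_left.mp (hd g hg1) (hg ▸ smul_mem_smul_set hy))
  -- basic connected neighborhoods off K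
  have hbasic : ∀ (U I : Set A),
      (∀ C, C ⊆ U → IsOpen C → IsConnected C → IsConnected (C \ I)) →
      ∀ (O : Set B), IsOpen O → O ⊆ b ⁻¹' U → ∀ x ∈ O, x ∉ K →
      ∃ W : Set B, IsOpen W ∧ x ∈ W ∧ W ⊆ O ∧ IsConnected (W \ b ⁻¹' I) := by
    intro U I hrel O hOo hOU x hxO hxK
    obtain ⟨V, hVo, hxV, hinj⟩ := hslice x hxK
    set W := connectedComponentIn (O ∩ V) x with hW
    have hxOV : x ∈ O ∩ V := ⟨hxO, hxV⟩
    have hWo : IsOpen W := (hOo.inter hVo).connectedComponentIn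
    have hxW : x ∈ W := mem_connectedComponentIn hxOV
    have hWOV : W ⊆ O ∩ V := connectedComponentIn_subset _ _
    have hWc : IsConnected W := isConnected_connectedComponentIn_iff.mpr hxOV
    have hbW : IsConnected (b '' W \ I) :=
      hrel _ (fun a ha => by obtain ⟨y, hy, rfl⟩ := ha; exact hOU (hWOV hy).1)
        (hopen _ hWo) (hWc.image _ hb.continuousOn)
    exact ⟨W, hWo, hxW, fun y hy => (hWOV hy).1,
      isConnected_diff_preimage_of_injOn hb hopen hWo
        (hinj.mono fun y hy => (hWOV hy).2) hbW⟩
  -- the hard (forward) direction in ambient terms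
  have hforward : ∀ (U I : Set A), IsOpen U → I ⊆ U →
      (IsOpen (U \ I) ∧ ∀ C, C ⊆ U → IsOpen C → IsConnected C → IsConnected (C \ I)) →
      (IsOpen (b ⁻¹' U \ b ⁻¹' I) ∧
        ∀ E, E ⊆ b ⁻¹' U → IsOpen E → IsConnected E → IsConnected (E \ b ⁻¹' I)) := by
    rintro U I hUo hIU ⟨hUIo, hrel⟩
    have hTopen : IsOpen (b ⁻¹' U \ b ⁻¹' I) := by
      rw [← Set.preimage_diff]
      exact hUIo.preimage hb
    refine ⟨hTopen, ?_⟩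
    intro E hEU hEo hEc
    have hbE : IsConnected (b '' E \ I) :=
      hrel _ (Set.image_subset_iff.mpr hEU) (hopen _ hEo) (hEc.image _ hb.continuousOn)
    have hne : (E \ b ⁻¹' I).Nonempty := by
      obtain ⟨a, ⟨y, hyE, rfl⟩, haI⟩ := hbE.1
      exact ⟨y, hyE, haI⟩
    refine ⟨hne, ?_⟩
    intro u v huo hvo hsub hu hv
    by_contra hempty
    rw [Set.not_nonempty_iff_eq_empty] at hempty
    set T := E \ b ⁻¹' I with hT
    have hTo : IsOpen T := by
      have heq : T = E ∩ (b ⁻¹' U \ b ⁻¹' I) := by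
        ext y
        exact ⟨fun h => ⟨h.1, hEU h.1, h.2⟩, fun h => ⟨h.1, h.2.2⟩⟩
      rw [heq]
      exact hEo.inter hTopen
    have hdicho : ∀ W : Set B, IsConnected (W \ b ⁻¹' I) → W ⊆ E →
        (W \ b ⁻¹' I ⊆ u ∨ W \ b ⁻¹' I ⊆ v) := by
      intro W hWc hWE
      have hWT : W \ b ⁻¹' I ⊆ T := fun y hy => ⟨hWE hy.1, hy.2⟩
      by_cases h1 : ((W \ b ⁻¹' I) ∩ u).Nonempty
      · by_cases h2 : ((W \ b ⁻¹' I) ∩ v).Nonempty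
        · exfalso
          obtain ⟨z, hz⟩ := hWc.2 u v huo hvo (hWT.trans hsub) h1 h2
          have hzT : z ∈ T ∩ (u ∩ v) := ⟨hWT hz.1, hz.2⟩
          rw [hempty] at hzT
          exact hzT
        · left
          intro y hy
          rcases hsub (hWT hy) with h | h
          · exact h
          · exact (h2 ⟨y, hy, h⟩).elim
      · right
        intro y hy
        rcases hsub (hWT hy) with h | h
        · exact (h1 ⟨y, hy, h⟩).elim
        · exact h
    have hget : ∀ (O : Set B), IsOpen O → O ⊆ E ∩ Kᶜ → ∀ x ∈ O,
        ∃ W, IsOpen W ∧ x ∈ W ∧ W ⊆ O ∧ IsConnected (W \ b ⁻¹' I) := by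
      intro O hOo hOE x hxO
      exact hbasic U I hrel O hOo (fun y hy => hEU (hOE hy).1) x hxO (hOE hxO).2
    set P : Set B := {x | x ∈ E ∧ x ∉ K ∧ ∃ W : Set B, IsOpen W ∧ x ∈ W ∧ W ⊆ E ∩ Kᶜ ∧
      IsConnected (W \ b ⁻¹' I) ∧ W \ b ⁻¹' I ⊆ u} with hPdef
    set Q : Set B := {x | x ∈ E ∧ x ∉ K ∧ ∃ W : Set B, IsOpen W ∧ x ∈ W ∧ W ⊆ E ∩ Kᶜ ∧
      IsConnected (W \ b ⁻¹' I) ∧ W \ b ⁻¹' I ⊆ v} with hQdef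
    have hPopen : IsOpen P := by
      rw [isOpen_iff_forall_mem_open]
      rintro x ⟨hxE, hxK, W, hWo, hxW, hWEK, hWconn, hWu⟩
      refine ⟨W, ?_, hWo, hxW⟩
      intro y hyW
      obtain ⟨W', hW'o, hyW', hW'W, hW'c⟩ := hget W hWo hWEK y hyW
      exact ⟨(hWEK hyW).1, (hWEK hyW).2, W', hW'o, hyW', hW'W.trans hWEK, hW'c,
        fun z hz => hWu ⟨hW'W hz.1, hz.2⟩⟩
    have hQopen : IsOpen Q := by
      rw [isOpen_iff_forall_mem_open]
      rintro x ⟨hxE, hxK, W, hWo, hxW, hWEK, hWconn, hWv⟩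
      refine ⟨W, ?_, hWo, hxW⟩
      intro y hyW
      obtain ⟨W', hW'o, hyW', hW'W, hW'c⟩ := hget W hWo hWEK y hyW
      exact ⟨(hWEK hyW).1, (hWEK hyW).2, W', hW'o, hyW', hW'W.trans hWEK, hW'c,
        fun z hz => hWv ⟨hW'W hz.1, hz.2⟩⟩
    have hPQ : ∀ x, x ∈ P → x ∈ Q → False := by
      rintro x ⟨hxE, hxK, W1, hW1o, hxW1, hW1E, hW1c, hW1u⟩
        ⟨_, _, W2, hW2o, hxW2, hW2E, hW2c, hW2v⟩
      obtain ⟨W3, hW3o, hxW3, hW3sub, hW3c⟩ :=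
        hget (W1 ∩ W2) (hW1o.inter hW2o) (fun y hy => hW1E hy.1) x ⟨hxW1, hxW2⟩
      obtain ⟨z, hz⟩ := hW3c.nonempty
      have hzu : z ∈ u := hW1u ⟨(hW3sub hz.1).1, hz.2⟩
      have hzv : z ∈ v := hW2v ⟨(hW3sub hz.1).2, hz.2⟩
      have hzT : z ∈ T := ⟨(hW1E (hW3sub hz.1).1).1, hz.2⟩
      have hmem : z ∈ T ∩ (u ∩ v) := ⟨hzT, hzu, hzv⟩
      rw [hempty] at hmem
      exact hmem
    have hPne : P.Nonempty := by
      obtain ⟨t, htT, htu⟩ := hu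
      obtain ⟨C₀, hC₀sub, hC₀o, htC₀, hC₀c⟩ :=
        locallyConnectedSpace_iff_subsets_isOpen_isConnected.mp ‹LocallyConnectedSpace B›
          t (T ∩ u) ((hTo.inter huo).mem_nhds ⟨htT, htu⟩)
      obtain ⟨z, hzKc, hzC₀⟩ := (hKconn C₀ hC₀o hC₀c).1
      have hzTu : z ∈ T ∩ u := hC₀sub hzC₀
      obtain ⟨W, hWo, hzW, hWsub, hWc⟩ :=
        hget ((T ∩ u) ∩ Kᶜ) ((hTo.inter huo).inter hKc_open)
          (fun y hy => ⟨hy.1.1.1, hy.2⟩) z ⟨hzTu, hzKc⟩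
      exact ⟨z, hzTu.1.1, hzKc, W, hWo, hzW,
        fun y hy => ⟨(hWsub hy).1.1.1, (hWsub hy).2⟩, hWc,
        fun y hy => (hWsub hy.1).1.2⟩
    have hQne : Q.Nonempty := by
      obtain ⟨t, htT, htv⟩ := hv
      obtain ⟨C₀, hC₀sub, hC₀o, htC₀, hC₀c⟩ :=
        locallyConnectedSpace_iff_subsets_isOpen_isConnected.mp ‹LocallyConnectedSpace B›
          t (T ∩ v) ((hTo.inter hvo).mem_nhds ⟨htT, htv⟩)
      obtain ⟨z, hzKc, hzC₀⟩ := (hKconn C₀ hC₀o hC₀c).1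
      have hzTv : z ∈ T ∩ v := hC₀sub hzC₀
      obtain ⟨W, hWo, hzW, hWsub, hWc⟩ :=
        hget ((T ∩ v) ∩ Kᶜ) ((hTo.inter hvo).inter hKc_open)
          (fun y hy => ⟨hy.1.1.1, hy.2⟩) z ⟨hzTv, hzKc⟩
      exact ⟨z, hzTv.1.1, hzKc, W, hWo, hzW,
        fun y hy => ⟨(hWsub hy).1.1.1, (hWsub hy).2⟩, hWc,
        fun y hy => (hWsub hy.1).1.2⟩
    have hEK : IsConnected (Kᶜ ∩ E) := hKconn E hEo hEc
    have hcover : Kᶜ ∩ E ⊆ P ∪ Q := by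
      rintro x ⟨hxK, hxE⟩
      obtain ⟨W, hWo, hxW, hWsub, hWc⟩ :=
        hget (E ∩ Kᶜ) (hEo.inter hKc_open) subset_rfl x ⟨hxE, hxK⟩
      rcases hdicho W hWc (fun y hy => (hWsub hy).1) with h | h
      · exact Or.inl ⟨hxE, hxK, W, hWo, hxW, hWsub, hWc, h⟩
      · exact Or.inr ⟨hxE, hxK, W, hWo, hxW, hWsub, hWc, h⟩
    have hmeetP : ((Kᶜ ∩ E) ∩ P).Nonempty := by
      obtain ⟨p, hp⟩ := hPne
      exact ⟨p, ⟨hp.2.1, hp.1⟩, hp⟩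
    have hmeetQ : ((Kᶜ ∩ E) ∩ Q).Nonempty := by
      obtain ⟨q, hq⟩ := hQne
      exact ⟨q, ⟨hq.2.1, hq.1⟩, hq⟩
    obtain ⟨w, hw⟩ := hEK.2 P Q hPopen hQopen hcover hmeetP hmeetQ
    exact hPQ w hw.2.1 hw.2.2
  -- the backward direction in ambient terms
  have hbackward : ∀ (U I : Set A),
      (IsOpen (b ⁻¹' U \ b ⁻¹' I) ∧
        ∀ E, E ⊆ b ⁻¹' U → IsOpen E → IsConnected E → IsConnected (E \ b ⁻¹' I)) →
      (IsOpen (U \ I) ∧ ∀ C, C ⊆ U → IsOpen C → IsConnected C → IsConnected (C \ I)) := by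
    rintro U I ⟨ho, hrel⟩
    constructor
    · have h1 : IsOpen (b '' (b ⁻¹' U \ b ⁻¹' I)) := hopen _ ho
      rwa [← Set.preimage_diff, Set.image_preimage_eq _ hsurj] at h1
    · intro C hCU hCo hCc
      obtain ⟨a, haC⟩ := hCc.nonempty
      obtain ⟨x, rfl⟩ := hsurj a
      set E := connectedComponentIn (b ⁻¹' C) x with hE
      have hEo : IsOpen E := (hCo.preimage hb).connectedComponentIn
      have hEc : IsConnected E := isConnected_connectedComponentIn_iff.mpr haC
      have hEC : E ⊆ b ⁻¹' C := connectedComponentIn_subset _ _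
      have hbE : b '' E = C := hcomp C hCo hCc.isPreconnected x haC
      have hconn := hrel E (fun y hy => hCU (hEC hy)) hEo hEc
      have himg : b '' (E \ b ⁻¹' I) = C \ I := by
        apply Set.Subset.antisymm
        · rintro _ ⟨y, ⟨hyE, hyI⟩, rfl⟩
          exact ⟨by rw [← hbE]; exact ⟨y, hyE, rfl⟩, hyI⟩
        · rintro a' ⟨ha'C, ha'I⟩
          have ha' : a' ∈ b '' E := hbE.symm ▸ ha'C
          obtain ⟨y, hyE, rfl⟩ := ha'
          exact ⟨y, ⟨hyE, ha'I⟩, rfl⟩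
      rw [← himg]
      exact hconn.image _ hb.continuousOn
  -- A is locally connected
  have hAlc : LocallyConnectedSpace A := by
    rw [locallyConnectedSpace_iff_subsets_isOpen_isConnected]
    intro a W hW
    obtain ⟨O, hOW, hOo, haO⟩ := mem_nhds_iff.mp hW
    obtain ⟨x, rfl⟩ := hsurj a
    obtain ⟨V, hVO, hVo, hxV, hVc⟩ :=
      locallyConnectedSpace_iff_subsets_isOpen_isConnected.mp ‹LocallyConnectedSpace B›
        x (b ⁻¹' O) ((hOo.preimage hb).mem_nhds haO)
    refine ⟨b '' V, ?_, hopen _ hVo, ⟨x, hxV, rfl⟩, hVc.image _ hb.continuousOn⟩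
    rintro a' ⟨y, hy, rfl⟩
    exact hOW (hVO hy)
  -- the bi-implication
  have hIff : ∀ U I : Set A, NegligibleElem U I ↔ NegligibleElem (b ⁻¹' U) (b ⁻¹' I) := by
    intro U I
    rw [negligibleElem_iff', negligibleElem_iff']
    constructor
    · rintro ⟨hUo, hIU, _, hneg⟩
      have hamb := (negligible_val_iff hUo hIU).mp hneg
      have h2 := hforward U I hUo hIU hamb
      exact ⟨hUo.preimage hb, Set.preimage_mono hIU,
        (hUo.preimage hb).locallyConnectedSpace,
        (negligible_val_iff (hUo.preimage hb) (Set.preimage_mono hIU)).mpr h2⟩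
    · rintro ⟨hUo', hIU', _, hneg'⟩
      have hUo : IsOpen U := by
        have h1 := hopen _ hUo'
        rwa [Set.image_preimage_eq _ hsurj] at h1
      have hIU : I ⊆ U := by
        intro a ha
        obtain ⟨x, rfl⟩ := hsurj a
        exact hIU' ha
      have hamb' := (negligible_val_iff hUo' hIU').mp hneg'
      have h2 := hbackward U I hamb'
      haveI := hAlc
      exact ⟨hUo, hIU, hUo.locallyConnectedSpace, (negligible_val_iff hUo hIU).mpr h2⟩
  -- part 1 : the image of K is negligible
  have hpart1 : IsNegligible (b '' K) := by
    rw [isNegligible_iff']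
    constructor
    · have heq : (b '' K)ᶜ = b '' Kᶜ := by
        ext a
        constructor
        · intro ha
          obtain ⟨x, rfl⟩ := hsurj a
          exact ⟨x, fun hxK => ha ⟨x, hxK, rfl⟩, rfl⟩
        · rintro ⟨x, hxK, rfl⟩ h
          exact hxK ((hsatK x).mp h)
      rw [heq]
      exact hopen _ hKc_open
    · intro C hCo hCc
      obtain ⟨a, haC⟩ := hCc.nonempty
      obtain ⟨x, rfl⟩ := hsurj a
      set E := connectedComponentIn (b ⁻¹' C) x with hE
      have hEo : IsOpen E := (hCo.preimage hb).connectedComponentIn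
      have hEc : IsConnected E := isConnected_connectedComponentIn_iff.mpr haC
      have hEC : E ⊆ b ⁻¹' C := connectedComponentIn_subset _ _
      have hbE : b '' E = C := hcomp C hCo hCc.isPreconnected x haC
      have hconn := hKconn E hEo hEc
      have himg : b '' (Kᶜ ∩ E) = (b '' K)ᶜ ∩ C := by
        apply Set.Subset.antisymm
        · rintro _ ⟨y, ⟨hyK, hyE⟩, rfl⟩
          exact ⟨fun h => hyK ((hsatK y).mp h), by rw [← hbE]; exact ⟨y, hyE, rfl⟩⟩
        · rintro a' ⟨ha'K, ha'C⟩
          have ha' : a' ∈ b '' E := hbE.symm ▸ ha'C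
          obtain ⟨y, hyE, rfl⟩ := ha'
          exact ⟨y, ⟨fun hyK => ha'K ⟨y, hyK, rfl⟩, hyE⟩, rfl⟩
      rw [← himg]
      exact hconn.image _ hb.continuousOn
  exact ⟨hpart1, hIff, hb, fun U I h => (hIff U I).mp h⟩
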